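/- Let B > 0, let (δ_t)_{t≥1} be a sequence of nonnegative real numbers with δ_t ≤ B for all t, let τ > 0, and define η_t = √(τ + Σ_{s=1}^{t−1} δ_s). Then η_{t+1} − η_t → 0 and δ_t / η_t → 0 as t → ∞. -/

import Mathlib

open Filter Finset Topology

/-- For the adaptive learning rate `η_t = √(τ + ∑_{s=1}^{t-1} δ_s)` built from bounded
nonnegative increments `δ_t ≤ B`, both `η_{t+1} - η_t` and `δ_t / η_t` tend to `0`. -/
theorem adaptive_rate_increments_vanish
    (B : ℝ) (hB : 0 < B)
    (δ : ℕ → ℝ) (hδ0 : ∀ t : ℕ, 1 ≤ t → 0 ≤ δ t) (hδB : ∀ t : ℕ, 1 ≤ t → δ t ≤ B)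
    (τ : ℝ) (hτ : 0 < τ)
    (η : ℕ → ℝ) (hη : ∀ t : ℕ, η t = Real.sqrt (τ + ∑ s ∈ Finset.Ico 1 t, δ s)) :
    Tendsto (fun t : ℕ => η (t + 1) - η t) atTop (𝓝 0) ∧
      Tendsto (fun t : ℕ => δ t / η t) atTop (𝓝 0) := by
  set S : ℕ → ℝ := fun t => τ + ∑ s ∈ Finset.Ico 1 t, δ s with hSdef
  have hstep : ∀ t : ℕ, 1 ≤ t → S (t + 1) = S t + δ t := by
    intro t ht
    simp only [hSdef]
    rw [Finset.sum_Ico_succ_top ht]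
    ring
  have hSτ : ∀ t, τ ≤ S t := by
    intro t
    have : (0:ℝ) ≤ ∑ s ∈ Finset.Ico 1 t, δ s :=
      Finset.sum_nonneg fun s hs => hδ0 s (Finset.mem_Ico.mp hs).1
    simp only [hSdef]; linarith
  have hSpos : ∀ t, 0 < S t := fun t => lt_of_lt_of_le hτ (hSτ t)
  have hmono : Monotone S := by
    apply monotone_nat_of_le_succ
    intro t
    rcases Nat.eq_zero_or_pos t with h | h
    · subst h; simp [hSdef]
    · rw [hstep t h]
      have := hδ0 t h
      linarith
  have hηS : ∀ t, η t = Real.sqrt (S t) := hη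
  have hηpos : ∀ t, 0 < η t := by
    intro t; rw [hηS t]; exact Real.sqrt_pos.mpr (hSpos t)
  -- the key pointwise bound for t ≥ 1
  have hkey : ∀ t : ℕ, 1 ≤ t → 0 ≤ η (t + 1) - η t ∧ η (t + 1) - η t ≤ δ t / η t := by
    intro t ht
    have hx : η (t + 1) = Real.sqrt (S t + δ t) := by rw [hηS, hstep t ht]
    have hy : η t = Real.sqrt (S t) := hηS t
    have hd : 0 ≤ δ t := hδ0 t ht
    have hxx : η (t + 1) * η (t + 1) = S t + δ t := by
      rw [hx]; exact Real.mul_self_sqrt (by linarith [hSpos t])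
    have hyy : η t * η t = S t := by rw [hy]; exact Real.mul_self_sqrt (hSpos t).le
    have hxy : η t ≤ η (t + 1) := by
      rw [hx, hy]; exact Real.sqrt_le_sqrt (by linarith)
    have hyp := hηpos t
    constructor
    · linarith
    · rw [le_div_iff₀ hyp]
      nlinarith [hηpos (t + 1)]
  -- second part: δ t / η t → 0
  have h2 : Tendsto (fun t : ℕ => δ t / η t) atTop (𝓝 0) := by
    rcases tendsto_of_monotone hmono with hdiv | ⟨l, hl⟩
    · -- S → ∞, so η → ∞ and δ/η ≤ B/η → 0
      have hηtop : Tendsto η atTop atTop := by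
        rw [tendsto_atTop_atTop]
        intro C
        obtain ⟨N, hN⟩ := eventually_atTop.mp (hdiv.eventually_ge_atTop (C ^ 2))
        refine ⟨N, fun t ht => ?_⟩
        have h1 : Real.sqrt (C ^ 2) ≤ Real.sqrt (S t) := Real.sqrt_le_sqrt (hN t ht)
        rw [Real.sqrt_sq_eq_abs] at h1
        rw [hηS t]
        exact le_trans (le_abs_self C) h1
      have hB0 : Tendsto (fun t : ℕ => B / η t) atTop (𝓝 0) :=
        tendsto_const_nhds.div_atTop hηtop
      apply tendsto_of_tendsto_of_tendsto_of_le_of_le' tendsto_const_nhds hB0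
      · filter_upwards [eventually_ge_atTop 1] with t ht
        exact div_nonneg (hδ0 t ht) (hηpos t).le
      · filter_upwards [eventually_ge_atTop 1] with t ht
        exact div_le_div_of_nonneg_right (hδB t ht) (hηpos t).le
    · -- S → l, so δ → 0 and η → √l > 0
      have hδ0' : Tendsto δ atTop (𝓝 0) := by
        have h1 : Tendsto (fun t => S (t + 1) - S t) atTop (𝓝 (l - l)) :=
          (hl.comp (tendsto_add_atTop_nat 1)).sub hl
        rw [sub_self] at h1
        apply h1.congr'
        filter_upwards [eventually_ge_atTop 1] with t ht
        rw [hstep t ht]; ring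
      have hlτ : τ ≤ l := ge_of_tendsto' hl hSτ
      have hηlim : Tendsto η atTop (𝓝 (Real.sqrt l)) := by
        have : Tendsto (fun t => Real.sqrt (S t)) atTop (𝓝 (Real.sqrt l)) := hl.sqrt
        exact this.congr fun t => (hηS t).symm
      have hne : Real.sqrt l ≠ 0 := ne_of_gt (Real.sqrt_pos.mpr (lt_of_lt_of_le hτ hlτ))
      have := hδ0'.div hηlim hne
      rw [zero_div] at this; exact this
  refine ⟨?_, h2⟩
  apply tendsto_of_tendsto_of_tendsto_of_le_of_le' tendsto_const_nhds h2
  · filter_upwards [eventually_ge_atTop 1] with t ht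
    exact (hkey t ht).1
  · filter_upwards [eventually_ge_atTop 1] with t ht
    exact (hkey t ht).2
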